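/- Let ℱ(t) = (1/√5)(α e^{(e^t−1)α} − β e^{(e^t−1)β}) with α = (1+√5)/2 and β = (1−√5)/2. Then for every integer r ≥ 1 and every real t, the r-th derivative of ℱ satisfies ℱ^{(r)}(t) = (1/√5) · Σ_{i=1}^{r} e^{i t} · S(r,i) · (α^{i+1} e^{α(e^t−1)} − β^{i+1} e^{β(e^t−1)}), where S(r,i) are the Stirling numbers of the second kind. -/

import Mathlib

/-- Stirling numbers of the second kind. -/
def stirling2 : ℕ → ℕ → ℕ
  | 0, 0 => 1
  | 0, _ + 1 => 0
  | _ + 1, 0 => 0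
  | n + 1, k + 1 => stirling2 n k + (k + 1) * stirling2 n (k + 1)

lemma stirling2_eq_zero : ∀ n k : ℕ, n < k → stirling2 n k = 0
  | 0, _+1, _ => rfl
  | n+1, k+1, h => by
      have h1 : n < k := Nat.lt_of_succ_lt_succ h
      have h2 : n < k+1 := Nat.lt_of_lt_of_le h1 (Nat.le_succ k)
      show stirling2 n k + (k+1) * stirling2 n (k+1) = 0
      rw [stirling2_eq_zero n k h1, stirling2_eq_zero n (k+1) h2]
      simp

lemma sum_key (w : ℕ → ℝ) (r : ℕ) :
    ∑ i ∈ Finset.range (r+1),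
      ((i : ℝ) * (stirling2 r i : ℝ) * w i + (stirling2 r i : ℝ) * w (i+1)) =
    ∑ j ∈ Finset.range (r+2), (stirling2 (r+1) j : ℝ) * w j := by
  rw [Finset.sum_add_distrib, Finset.sum_range_succ' _ (r+1)]
  have h0 : (stirling2 (r+1) 0 : ℝ) = 0 := by norm_num [stirling2]
  rw [h0, zero_mul, add_zero]
  have hrec : ∀ j, (stirling2 (r+1) (j+1) : ℝ) * w (j+1) =
      (stirling2 r j : ℝ) * w (j+1) + ((j:ℝ)+1) * (stirling2 r (j+1) : ℝ) * w (j+1) := by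
    intro j
    have : stirling2 (r+1) (j+1) = stirling2 r j + (j+1) * stirling2 r (j+1) := rfl
    rw [this]; push_cast; ring
  rw [Finset.sum_congr rfl (fun j _ => hrec j), Finset.sum_add_distrib]
  have hA : ∑ i ∈ Finset.range (r+1), (i : ℝ) * (stirling2 r i : ℝ) * w i
      = ∑ j ∈ Finset.range (r+1), ((j:ℝ)+1) * (stirling2 r (j+1) : ℝ) * w (j+1) := by
    rw [Finset.sum_range_succ' (fun i => (i : ℝ) * (stirling2 r i : ℝ) * w i) r,
        Finset.sum_range_succ (fun j => ((j:ℝ)+1) * (stirling2 r (j+1) : ℝ) * w (j+1)) r,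
        stirling2_eq_zero r (r+1) (Nat.lt_succ_self r)]
    push_cast
    simp
  rw [hA]
  ring

lemma aux_deriv (c a b : ℝ) (r : ℕ) :
    iteratedDeriv r (fun s : ℝ =>
        c * (a * Real.exp ((Real.exp s - 1) * a) - b * Real.exp ((Real.exp s - 1) * b))) =
    fun t : ℝ => c * ∑ i ∈ Finset.range (r+1), Real.exp (i*t) * (stirling2 r i : ℝ) *
      (a^(i+1) * Real.exp (a * (Real.exp t - 1)) - b^(i+1) * Real.exp (b * (Real.exp t - 1))) := by
  induction r with
  | zero =>
    funext t
    rw [iteratedDeriv_zero]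
    rw [mul_comm (Real.exp t - 1) a, mul_comm (Real.exp t - 1) b]
    simp [stirling2]
  | succ r ih =>
    funext t
    rw [iteratedDeriv_succ, ih]
    have hEa : HasDerivAt (fun t : ℝ => Real.exp (a * (Real.exp t - 1)))
        (Real.exp (a * (Real.exp t - 1)) * (a * Real.exp t)) t := by
      simpa using (((Real.hasDerivAt_exp t).sub_const 1).const_mul a).exp
    have hEb : HasDerivAt (fun t : ℝ => Real.exp (b * (Real.exp t - 1)))
        (Real.exp (b * (Real.exp t - 1)) * (b * Real.exp t)) t := by
      simpa using (((Real.hasDerivAt_exp t).sub_const 1).const_mul b).exp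
    have hterm : ∀ i : ℕ, HasDerivAt (fun t : ℝ => Real.exp (↑i*t) * (stirling2 r i : ℝ) *
        (a^(i+1) * Real.exp (a * (Real.exp t - 1)) - b^(i+1) * Real.exp (b * (Real.exp t - 1))))
        ((Real.exp (↑i*t) * (↑i) * (stirling2 r i : ℝ)) *
          (a^(i+1) * Real.exp (a * (Real.exp t - 1)) - b^(i+1) * Real.exp (b * (Real.exp t - 1)))
        + (Real.exp (↑i*t) * (stirling2 r i : ℝ)) *
          (a^(i+1) * (Real.exp (a * (Real.exp t - 1)) * (a * Real.exp t))
            - b^(i+1) * (Real.exp (b * (Real.exp t - 1)) * (b * Real.exp t)))) t := by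
      intro i
      have h1 : HasDerivAt (fun t : ℝ => Real.exp (↑i * t) * (stirling2 r i : ℝ))
          (Real.exp (↑i * t) * (↑i) * (stirling2 r i : ℝ)) t := by
        have := (((hasDerivAt_id t).const_mul (i:ℝ)).exp).mul_const (stirling2 r i : ℝ)
        simpa [mul_comm, mul_assoc, mul_left_comm] using this
      exact h1.mul ((hEa.const_mul (a^(i+1))).sub (hEb.const_mul (b^(i+1))))
    have hsum := (HasDerivAt.fun_sum (fun i (_ : i ∈ Finset.range (r+1)) => hterm i)).const_mul c
    rw [hsum.deriv]
    congr 1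
    have key := sum_key (fun j => Real.exp (↑j * t) *
      (a^(j+1) * Real.exp (a * (Real.exp t - 1)) - b^(j+1) * Real.exp (b * (Real.exp t - 1)))) r
    refine Eq.trans (Finset.sum_congr rfl ?_) (Eq.trans key (Finset.sum_congr rfl ?_))
    · intro i _
      have hexp : Real.exp ((↑(i+1) : ℝ) * t) = Real.exp (↑i * t) * Real.exp t := by
        rw [← Real.exp_add]; push_cast; ring_nf
      rw [hexp]
      ring
    · intro j _
      ring

open Finset Real in
/-- Higher derivatives of the e.g.f. of the Fibonacci-Fubini numbers. -/
theorem fibonacciFubini_egf_iteratedDeriv (r : ℕ) (hr : 1 ≤ r) (t : ℝ) :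
    iteratedDeriv r
        (fun s : ℝ => (1 / Real.sqrt 5) *
          (((1 + Real.sqrt 5) / 2) * Real.exp ((Real.exp s - 1) * ((1 + Real.sqrt 5) / 2)) -
            ((1 - Real.sqrt 5) / 2) * Real.exp ((Real.exp s - 1) * ((1 - Real.sqrt 5) / 2)))) t =
      (1 / Real.sqrt 5) *
        ∑ i ∈ Finset.Icc 1 r, Real.exp (i * t) * (stirling2 r i : ℝ) *
          (((1 + Real.sqrt 5) / 2) ^ (i + 1) *
              Real.exp (((1 + Real.sqrt 5) / 2) * (Real.exp t - 1)) -
            ((1 - Real.sqrt 5) / 2) ^ (i + 1) *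
              Real.exp (((1 - Real.sqrt 5) / 2) * (Real.exp t - 1))) := by
  have h := congrFun (aux_deriv (1 / Real.sqrt 5) ((1 + Real.sqrt 5) / 2)
    ((1 - Real.sqrt 5) / 2) r) t
  rw [h]
  congr 1
  obtain ⟨r', rfl⟩ : ∃ r', r = r' + 1 := ⟨r - 1, by omega⟩
  have hins : Finset.range (r' + 1 + 1) = insert 0 (Finset.Icc 1 (r' + 1)) := by
    ext x; simp [Nat.lt_succ_iff]; omega
  rw [hins, Finset.sum_insert (by simp)]
  have : (stirling2 (r' + 1) 0 : ℝ) = 0 := by norm_num [stirling2]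
  rw [this]
  ring
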